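/- arXiv:1307.2114 — 6 statements merged into one kernel-verified Lean document; each statement's English description precedes it below -/
import Mathlib

section
/- For any natural number b ≥ 2, the sum over l from 1 to b-1 of cot²(lπ/(2b-1)) equals (2b-3)(b-1)/3. -/
open Finset Polynomial

/-- split a sum over an even range into even and odd indices -/
lemma sum_range_even_odd {M : Type*} [AddCommMonoid M] (f : ℕ → M) (N : ℕ) :
    ∑ j ∈ Finset.range (2*N), f j
      = ∑ k ∈ Finset.range N, f (2*k) + ∑ k ∈ Finset.range N, f (2*k+1) := by
  induction N with
  | zero => simp
  | succ N ih =>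
    rw [show 2*(N+1) = 2*N+1+1 by ring, Finset.sum_range_succ, Finset.sum_range_succ, ih,
      Finset.sum_range_succ, Finset.sum_range_succ]
    abel

lemma two_mul_choose_two (k : ℕ) : 2 * k.choose 2 = k * (k-1) := by
  induction k with
  | zero => rfl
  | succ k ih =>
    rw [Nat.choose_succ_succ, Nat.choose_one_right, Nat.mul_add, ih]
    cases k with
    | zero => rfl
    | succ j =>
      rw [show (j:ℕ)+1-1 = j by omega, show (j:ℕ)+1+1-1 = j+1 by omega]
      ring

lemma six_mul_choose_three (k : ℕ) : 6 * k.choose 3 = k * (k-1) * (k-2) := by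
  induction k with
  | zero => rfl
  | succ k ih =>
    rw [Nat.choose_succ_succ, Nat.mul_add, show (6:ℕ) = 3*2 by rfl, Nat.mul_assoc 3 2,
      two_mul_choose_two, ← show (6:ℕ) = 3*2 by rfl, ih]
    match k with
    | 0 => rfl
    | 1 => rfl
    | (j+2) =>
      rw [show (j:ℕ)+2-1 = j+1 by omega, show (j:ℕ)+2-2 = j by omega,
        show (j:ℕ)+2+1-1 = j+2 by omega, show (j:ℕ)+2+1-2 = j+1 by omega]
      ring

lemma neg_one_pow_complex (t : ℕ) :
    ((-1:ℂ)^t).im = 0 ∧ ((-1:ℂ)^t).re = (-1:ℝ)^t := by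
  rcases Nat.even_or_odd t with he | ho
  · rw [he.neg_one_pow, he.neg_one_pow]; simp
  · rw [ho.neg_one_pow, ho.neg_one_pow]; simp

/-- De Moivre expansion of `sin ((2m+1)θ)`. -/
lemma sin_odd_mul (m : ℕ) (θ : ℝ) :
    Real.sin ((2*m+1) * θ)
      = ∑ k ∈ Finset.range (m+1),
          (-1:ℝ)^(m-k) * ((2*m+1).choose (2*k)) * Real.cos θ ^ (2*k)
            * Real.sin θ ^ (2*(m-k)+1) := by
  set c := Real.cos θ
  set s := Real.sin θ
  have h := Complex.cos_add_sin_mul_I_pow (2*m+1) (θ:ℂ)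
  have hcast : ((2*m+1 : ℕ):ℂ) * (θ:ℂ) = (((2*m+1 : ℕ) * θ : ℝ) : ℂ) := by push_cast; ring
  rw [hcast, ← Complex.ofReal_cos, ← Complex.ofReal_sin, ← Complex.ofReal_cos,
    ← Complex.ofReal_sin] at h
  have h2 : Real.sin ((2*m+1) * θ)
      = (((c:ℂ) + (s:ℂ) * Complex.I) ^ (2*m+1)).im := by
    rw [h]
    simp only [Complex.add_im, Complex.ofReal_im, Complex.mul_im, Complex.ofReal_re,
      Complex.I_im, Complex.I_re, mul_one, mul_zero, zero_add, add_zero, zero_mul]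
    push_cast
    ring_nf
  rw [h2, add_pow, Complex.im_sum]
  have hterm : ∀ j : ℕ,
      ((c:ℂ)^j * ((s:ℂ)*Complex.I)^(2*m+1-j) * ((2*m+1).choose j : ℕ)).im
        = (c^j * s^(2*m+1-j) * ((2*m+1).choose j : ℝ))
            * (Complex.I^(2*m+1-j)).im := by
    intro j
    rw [show (c:ℂ)^j * ((s:ℂ)*Complex.I)^(2*m+1-j) * ((2*m+1).choose j : ℕ)
        = ((c^j * s^(2*m+1-j) * ((2*m+1).choose j : ℝ) : ℝ):ℂ) * Complex.I^(2*m+1-j) by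
      push_cast; ring]
    simp [Complex.mul_im, ← Complex.ofReal_pow]
  simp only [hterm]
  rw [show 2*m+1+1 = 2*(m+1) by ring, sum_range_even_odd]
  have hodd : ∀ k ∈ Finset.range (m+1),
      (c^(2*k+1) * s^(2*m+1-(2*k+1)) * ((2*m+1).choose (2*k+1) : ℝ))
        * (Complex.I^(2*m+1-(2*k+1))).im = 0 := by
    intro k hk
    have hk' : k ≤ m := Nat.lt_succ_iff.mp (Finset.mem_range.mp hk)
    have hI : (Complex.I^(2*m+1-(2*k+1))).im = 0 := by
      rw [show 2*m+1-(2*k+1) = 2*(m-k) by omega, pow_mul, Complex.I_sq]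
      exact (neg_one_pow_complex _).1
    rw [hI, mul_zero]
  rw [Finset.sum_congr rfl hodd]
  have heven : ∀ k ∈ Finset.range (m+1),
      (c^(2*k) * s^(2*m+1-2*k) * ((2*m+1).choose (2*k) : ℝ))
        * (Complex.I^(2*m+1-2*k)).im
      = (-1:ℝ)^(m-k) * ((2*m+1).choose (2*k)) * c ^ (2*k) * s ^ (2*(m-k)+1) := by
    intro k hk
    have hk' : k ≤ m := Nat.lt_succ_iff.mp (Finset.mem_range.mp hk)
    have hI : (Complex.I^(2*m+1-2*k)).im = (-1:ℝ)^(m-k) := by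
      rw [show 2*m+1-2*k = 2*(m-k)+1 by omega, pow_succ, pow_mul, Complex.I_sq,
        Complex.mul_I_im]
      exact (neg_one_pow_complex _).2
    rw [show 2*m+1-2*k = 2*(m-k)+1 by omega] at hI ⊢
    rw [hI]
    ring
  rw [Finset.sum_congr rfl heven]
  simp

/-- the polynomial whose roots are `cot² (l π/(2m+1))`. -/
noncomputable def cotPoly (m : ℕ) : Polynomial ℝ :=
  ∑ k ∈ Finset.range (m+1),
    Polynomial.C ((-1:ℝ)^(m-k) * ((2*m+1).choose (2*k))) * Polynomial.X ^ k

lemma cotPoly_coeff (m j : ℕ) :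
    (cotPoly m).coeff j
      = if j ≤ m then (-1:ℝ)^(m-j) * ((2*m+1).choose (2*j)) else 0 := by
  rw [cotPoly, Polynomial.finset_sum_coeff,
    Finset.sum_congr rfl (fun k _ => by rw [Polynomial.coeff_C_mul, Polynomial.coeff_X_pow])]
  simp only [mul_ite, mul_one, mul_zero]
  rw [Finset.sum_ite_eq]
  simp [Nat.lt_succ_iff]

lemma cotPoly_eval_mul (m : ℕ) (θ : ℝ) (hs : Real.sin θ ≠ 0) :
    (cotPoly m).eval (Real.cot θ ^ 2) * Real.sin θ ^ (2*m+1)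
      = Real.sin ((2*m+1) * θ) := by
  rw [sin_odd_mul, cotPoly, Polynomial.eval_finset_sum, Finset.sum_mul]
  refine Finset.sum_congr rfl fun k hk => ?_
  have hk' : k ≤ m := Nat.lt_succ_iff.mp (Finset.mem_range.mp hk)
  simp only [Polynomial.eval_mul, Polynomial.eval_C, Polynomial.eval_pow, Polynomial.eval_X]
  rw [Real.cot_eq_cos_div_sin, ← pow_mul, div_pow,
    show 2*m+1 = 2*k + (2*(m-k)+1) by omega, pow_add]
  have h2 : Real.sin θ ^ (2*k) ≠ 0 := pow_ne_zero _ hs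
  field_simp

lemma cot_sq_sum_key (m : ℕ) :
    ∑ l ∈ Finset.Icc 1 (m+1),
        Real.cot ((l : ℝ) * Real.pi / (2 * (m:ℝ) + 3)) ^ 2
      = ((m:ℝ) + 1) * (2 * (m:ℝ) + 1) / 3 := by
  set M := m + 1 with hM
  have hpi := Real.pi_pos
  have hden : (0:ℝ) < 2 * (M:ℝ) + 1 := by positivity
  have hdeq : 2 * (m:ℝ) + 3 = 2 * (M:ℝ) + 1 := by push_cast [hM]; ring
  rw [hdeq]
  set r : ℕ → ℝ := fun l => Real.cot ((l : ℝ) * Real.pi / (2 * (M:ℝ) + 1)) ^ 2 with hr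
  set θ : ℕ → ℝ := fun l => (l : ℝ) * Real.pi / (2 * (M:ℝ) + 1) with hθ
  have hθmem : ∀ l ∈ Finset.Icc 1 M, θ l ∈ Set.Ioo 0 (Real.pi / 2) := by
    intro l hl
    rw [Finset.mem_Icc] at hl
    constructor
    · apply div_pos _ hden
      have : (1:ℝ) ≤ (l:ℝ) := by exact_mod_cast hl.1
      positivity
    · rw [div_lt_iff₀ hden]
      have hl2 : (l:ℝ) ≤ (M:ℝ) := by exact_mod_cast hl.2
      nlinarith
  -- each r l is a root of cotPoly M
  have hsinpos : ∀ l ∈ Finset.Icc 1 M, 0 < Real.sin (θ l) := by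
    intro l hl
    obtain ⟨h1, h2⟩ := hθmem l hl
    exact Real.sin_pos_of_pos_of_lt_pi h1 (by linarith)
  have hroot : ∀ l ∈ Finset.Icc 1 M, (cotPoly M).eval (r l) = 0 := by
    intro l hl
    have hs := (hsinpos l hl).ne'
    have h1 := cotPoly_eval_mul M (θ l) hs
    have h2 : (2 * (M:ℝ) + 1) * θ l = (l:ℝ) * Real.pi := by
      rw [hθ]; field_simp
    have h3 : Real.sin ((2 * (M:ℝ) + 1) * θ l) = 0 := by
      rw [h2]; exact Real.sin_nat_mul_pi l
    rw [h3] at h1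
    have h5 : Real.sin (θ l) ^ (2*M+1) ≠ 0 := pow_ne_zero _ hs
    rcases mul_eq_zero.mp h1 with h | h
    · exact h
    · exact absurd h h5
  -- strict antitonicity hence injectivity
  have hanti : ∀ l₁ ∈ Finset.Icc 1 M, ∀ l₂ ∈ Finset.Icc 1 M, l₁ < l₂ → r l₂ < r l₁ := by
    intro l₁ hl₁ l₂ hl₂ hlt
    obtain ⟨ha1, hb1⟩ := hθmem l₁ hl₁
    obtain ⟨ha2, hb2⟩ := hθmem l₂ hl₂
    have hs1 := hsinpos l₁ hl₁
    have hs2 := hsinpos l₂ hl₂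
    have hc1 : 0 < Real.cos (θ l₁) := Real.cos_pos_of_mem_Ioo ⟨by linarith, hb1⟩
    have hc2 : 0 < Real.cos (θ l₂) := Real.cos_pos_of_mem_Ioo ⟨by linarith, hb2⟩
    have hθlt : θ l₁ < θ l₂ := by
      rw [hθ]
      dsimp only
      have h1 : (l₁:ℝ) < (l₂:ℝ) := by exact_mod_cast hlt
      gcongr
    have hcos : Real.cos (θ l₂) < Real.cos (θ l₁) :=
      Real.cos_lt_cos_of_nonneg_of_le_pi ha1.le (by linarith) hθlt
    have hsin : Real.sin (θ l₁) < Real.sin (θ l₂) :=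
      Real.strictMonoOn_sin ⟨by linarith, by linarith⟩ ⟨by linarith, by linarith⟩ hθlt
    have hcotpos : 0 < Real.cot (θ l₂) := by
      rw [Real.cot_eq_cos_div_sin]; exact div_pos hc2 hs2
    have hcotlt : Real.cot (θ l₂) < Real.cot (θ l₁) := by
      rw [Real.cot_eq_cos_div_sin, Real.cot_eq_cos_div_sin, div_lt_div_iff₀ hs2 hs1]
      nlinarith
    exact pow_lt_pow_left₀ hcotlt hcotpos.le two_ne_zero
  have hinj : Set.InjOn r (Finset.Icc 1 M) := by
    intro x hx y hy hxy
    rw [Finset.mem_coe] at hx hy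
    by_contra hne
    rcases lt_or_gt_of_ne hne with h | h
    · exact (hanti x hx y hy h).ne hxy.symm
    · exact (hanti y hy x hx h).ne hxy
  -- the polynomial
  set P := cotPoly M with hP
  have hMne : ((2*M+1 : ℕ):ℝ) ≠ 0 := Nat.cast_ne_zero.mpr (by omega)
  have hch : (2*M+1).choose (2*M) = 2*M+1 := by
    have h := Nat.choose_symm (n := 2*M+1) (k := 1) (by omega)
    rw [Nat.choose_one_right] at h
    simpa using h
  have hcm : P.coeff M = ((2*M+1 : ℕ) : ℝ) := by
    rw [hP, cotPoly_coeff, if_pos le_rfl, Nat.sub_self, pow_zero, one_mul, hch]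
  have hdeg : P.natDegree = M :=
    le_antisymm
      (Polynomial.natDegree_le_iff_coeff_eq_zero.mpr fun N hN => by
        rw [hP, cotPoly_coeff, if_neg (by omega)])
      (Polynomial.le_natDegree_of_ne_zero (by rw [hcm]; exact hMne))
  have hP0 : P ≠ 0 := fun h => hMne (by rw [← hcm, h, Polynomial.coeff_zero])
  set T := (Finset.Icc 1 M).image r with hT
  have hcardT : T.card = M := by
    rw [hT, Finset.card_image_of_injOn hinj, Nat.card_Icc]; omega
  have hsub : T.val ≤ P.roots := by
    rw [Multiset.le_iff_subset T.nodup]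
    intro x hx
    rw [Finset.mem_val, hT, Finset.mem_image] at hx
    obtain ⟨l, hl, rfl⟩ := hx
    exact Polynomial.mem_roots'.mpr ⟨hP0, hroot l hl⟩
  have hTval : T.val = P.roots :=
    Multiset.eq_of_le_of_card_le hsub (by
      calc Multiset.card P.roots ≤ P.natDegree := P.card_roots'
        _ = M := hdeg
        _ = Multiset.card T.val := hcardT.symm)
  -- Vieta on the rescaled monic polynomial
  set Q := Polynomial.C (((2*M+1:ℕ):ℝ)⁻¹) * P with hQ
  have hinv : (((2*M+1:ℕ):ℝ)⁻¹) ≠ 0 := inv_ne_zero hMne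
  have hQdeg : Q.natDegree = M := by
    rw [hQ, Polynomial.natDegree_C_mul hinv, hdeg]
  have hQmonic : Q.Monic := by
    unfold Polynomial.Monic
    rw [Polynomial.leadingCoeff, hQdeg, hQ, Polynomial.coeff_C_mul, hcm,
      inv_mul_cancel₀ hMne]
  have hQroots : Q.roots = P.roots := Polynomial.roots_C_mul P hinv
  have hQsplits : Q.Splits :=
    Polynomial.splits_iff_card_roots.mpr (by rw [hQroots, ← hTval, hQdeg]; exact hcardT)
  have hsum := hQsplits.nextCoeff_eq_neg_sum_roots_of_monic hQmonic
  have hnext : Q.nextCoeff = (((2*M+1:ℕ):ℝ)⁻¹) * (-(((2*M+1).choose 3 : ℕ):ℝ)) := by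
    rw [Polynomial.nextCoeff_of_natDegree_pos (by rw [hQdeg]; omega), hQdeg, hQ,
      Polynomial.coeff_C_mul, hP, cotPoly_coeff, if_pos (by omega),
      show M - (M-1) = 1 by omega, pow_one, show 2*(M-1) = (2*M+1) - 3 by omega,
      Nat.choose_symm (by omega)]
    ring
  have hsumval : (∑ l ∈ Finset.Icc 1 M, r l) = P.roots.sum := by
    rw [← hTval, hT]
    have h1 : (∑ x ∈ (Finset.Icc 1 M).image r, x) = ∑ l ∈ Finset.Icc 1 M, r l :=
      Finset.sum_image fun x hx y hy h => hinj hx hy h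
    rw [← h1]
    simp [Finset.sum]
  have hfinal : (∑ l ∈ Finset.Icc 1 M, r l)
      = (((2*M+1:ℕ):ℝ)⁻¹) * (((2*M+1).choose 3 : ℕ):ℝ) := by
    rw [hsumval, ← hQroots]
    rw [hnext] at hsum
    linarith [hsum]
  have h6R : 6 * (((2*M+1).choose 3 : ℕ) : ℝ)
      = (2*(m:ℝ)+3) * (2*(m:ℝ)+2) * (2*(m:ℝ)+1) := by
    have h := six_mul_choose_three (2*M+1)
    rw [show 2*M+1-1 = 2*m+2 by omega, show 2*M+1-2 = 2*m+1 by omega,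
      show 2*M+1 = 2*m+3 by omega] at h
    exact_mod_cast h
  have hcast : ((2*M+1:ℕ):ℝ) = 2*(m:ℝ)+3 := by push_cast [hM]; ring
  show (∑ l ∈ Finset.Icc 1 M, r l) = ((m:ℝ) + 1) * (2 * (m:ℝ) + 1) / 3
  rw [hfinal, hcast]
  have h3 : (2*(m:ℝ)+3) ≠ 0 := by positivity
  field_simp
  nlinarith [h6R]

theorem cot_sq_sum_odd (b : ℕ) (hb : 2 ≤ b) :
    ∑ l ∈ Finset.Icc 1 (b - 1), (Real.cot ((l : ℝ) * Real.pi / (2 * b - 1))) ^ 2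
      = (2 * (b : ℝ) - 3) * ((b : ℝ) - 1) / 3 := by
  obtain ⟨m, rfl⟩ : ∃ m, b = m + 2 := ⟨b - 2, by omega⟩
  rw [show m + 2 - 1 = m + 1 by omega,
    show (2 * ((m+2 : ℕ):ℝ) - 1) = 2 * (m:ℝ) + 3 by push_cast; ring,
    cot_sq_sum_key m]
  push_cast
  ring
end

section
/- For any natural number b ≥ 2, the sum over l from 1 to b-1 of 1/sin²(lπ/b) equals (b²-1)/3. -/
open Finset Complex

private lemma sumL1 (b : ℕ) (x : ℂ) :
    (x - 1) ^ 2 * ∑ j ∈ range b, (j : ℂ) * x ^ j = x ^ b * ((x - 1) * b - x) + x := by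
  induction b with
  | zero => simp
  | succ n ih =>
    rw [sum_range_succ, mul_add, ih]
    push_cast
    ring

private lemma sumL2 (b : ℕ) (x : ℂ) :
    (x - 1) ^ 3 * ∑ j ∈ range b, (j : ℂ) ^ 2 * x ^ j
      = x ^ b * ((x - 1) ^ 2 * b ^ 2 - 2 * x * (x - 1) * b + x * (x + 1)) - x * (x + 1) := by
  induction b with
  | zero => simp
  | succ n ih =>
    rw [sum_range_succ, mul_add, ih]
    push_cast
    ring

private lemma geom_zero {b : ℕ} {z : ℂ} (h1 : z ^ b = 1) (hz : z ≠ 1) :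
    ∑ j ∈ range b, z ^ j = 0 := by
  have h2 : z - 1 ≠ 0 := sub_ne_zero.mpr hz
  have h := geom_sum_mul z b
  rw [h1, sub_self] at h
  exact (mul_eq_zero.mp h).resolve_right h2

private lemma key_point (b : ℕ) (hb : b ≠ 0) (z : ℂ) (h1 : z ^ b = 1) (hz : z ≠ 1) :
    -4 * z / (z - 1) ^ 2
      = 2 / (b : ℂ) * (∑ j ∈ range b, (j : ℂ) ^ 2 * z ^ j)
        - 2 * ∑ j ∈ range b, (j : ℂ) * z ^ j := by
  have hz1 : z - 1 ≠ 0 := sub_ne_zero.mpr hz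
  have hbc : (b : ℂ) ≠ 0 := Nat.cast_ne_zero.mpr hb
  have hL1 := sumL1 b z
  have hL2 := sumL2 b z
  rw [h1] at hL1 hL2
  have e1 : ∑ j ∈ range b, (j : ℂ) * z ^ j = ((z - 1) * b) / (z - 1) ^ 2 := by
    rw [eq_div_iff (pow_ne_zero 2 hz1)]
    linear_combination hL1
  have e2 : ∑ j ∈ range b, (j : ℂ) ^ 2 * z ^ j
      = ((z - 1) ^ 2 * b ^ 2 - 2 * z * (z - 1) * b) / (z - 1) ^ 3 := by
    rw [eq_div_iff (pow_ne_zero 3 hz1)]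
    linear_combination hL2
  rw [e1, e2]
  field_simp
  ring

private lemma sin_sq_c (t : ℝ) :
    ((Real.sin t : ℂ)) ^ 2
      = -(Complex.exp (2 * (t : ℂ) * I) - 1) ^ 2 / (4 * Complex.exp (2 * (t : ℂ) * I)) := by
  have hz0 : Complex.exp (2 * (t : ℂ) * I) ≠ 0 := Complex.exp_ne_zero _
  have h1 := Complex.sin_sq_add_cos_sq (t : ℂ)
  have h2 := Complex.cos_two_mul (t : ℂ)
  have h3 := Complex.two_cos (2 * (t : ℂ))
  have h4 : Complex.exp (-(2 * (t : ℂ)) * I) = (Complex.exp (2 * (t : ℂ) * I))⁻¹ := by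
    rw [← Complex.exp_neg]; ring_nf
  rw [h4] at h3
  rw [Complex.ofReal_sin]
  rw [eq_div_iff (by simpa using hz0)]
  field_simp at h3
  linear_combination (4 * Complex.exp (2 * (t:ℂ) * I)) * h1 + (2*Complex.exp (2 * (t:ℂ) * I)) * h2 - h3

private lemma z_pow (b l : ℕ) (hb : b ≠ 0) : (Complex.exp (2 * Real.pi * I * l / b)) ^ b = 1 := by
  have hbc : (b : ℂ) ≠ 0 := Nat.cast_ne_zero.mpr hb
  rw [← Complex.exp_nat_mul]
  rw [show (b : ℂ) * (2 * Real.pi * I * l / b) = l * (2 * Real.pi * I) by field_simp]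
  exact Complex.exp_nat_mul_two_pi_mul_I l

private lemma z_ne_one (b l : ℕ) (hl1 : 1 ≤ l) (hlb : l < b) :
    Complex.exp (2 * Real.pi * I * l / b) ≠ 1 := by
  have hb0 : 0 < b := lt_of_le_of_lt (Nat.zero_le l) hlb
  have hbr : (0 : ℝ) < b := by exact_mod_cast hb0
  have hbc : (b : ℂ) ≠ 0 := Nat.cast_ne_zero.mpr hb0.ne'
  intro h
  rw [Complex.exp_eq_one_iff] at h
  obtain ⟨n, hn⟩ := h
  have hI : (2 * (Real.pi : ℂ) * I) ≠ 0 := by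
    simp [Real.pi_ne_zero, Complex.I_ne_zero]
  have hlc : (l : ℂ) = n * b := by
    have h2 : (l : ℂ) * (2 * Real.pi * I) = (n * b) * (2 * Real.pi * I) := by
      field_simp at hn
      linear_combination (2 * Real.pi * I) * hn
    exact mul_right_cancel₀ hI h2
  have hlr : (l : ℝ) = (n : ℝ) * b := by exact_mod_cast hlc
  have hl1' : (1 : ℝ) ≤ l := by exact_mod_cast hl1
  have hlb' : (l : ℝ) < b := by exact_mod_cast hlb
  have hn0 : (0 : ℝ) < (n : ℝ) := by nlinarith
  have hn1 : (1 : ℝ) ≤ (n : ℝ) := by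
    exact_mod_cast Int.cast_pos.mp hn0
  nlinarith

private lemma innerSumRoots (b j : ℕ) (hb : 2 ≤ b) (hj : j < b) :
    ∑ l ∈ Finset.Icc 1 (b - 1), (Complex.exp (2 * Real.pi * I * j / b)) ^ l
      = if j = 0 then ((b : ℂ) - 1) else -1 := by
  have hb1 : (1 : ℕ) ≤ b := by omega
  have hIcc : Finset.Icc 1 (b - 1) = Finset.Ico 1 b := by
    rw [← Finset.Ico_add_one_right_eq_Icc]
    congr 1
    omega
  rw [hIcc]
  by_cases h : j = 0
  · subst h
    simp only [Nat.cast_zero, mul_zero, zero_div, Complex.exp_zero, one_pow, sum_const,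
      nsmul_eq_mul, mul_one, Nat.card_Ico, if_true]
    push_cast [hb1]
    ring
  · have hzb := z_pow b j (by omega)
    have hzne := z_ne_one b j (by omega) hj
    have h0 := geom_zero hzb hzne
    rw [Finset.range_eq_Ico,
      ← Finset.sum_Ico_consecutive _ (by omega : (0:ℕ) ≤ 1) (by omega : 1 ≤ b)] at h0
    simp only [h, if_false]
    have h1 : ∑ l ∈ Finset.Ico 0 1, (Complex.exp (2 * Real.pi * I * j / b)) ^ l = 1 := by
      simp
    rw [h1] at h0
    linear_combination h0

private lemma sumC1 (b : ℕ) : ∑ j ∈ range b, (j : ℂ) = b * (b - 1) / 2 := by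
  induction b with
  | zero => simp
  | succ n ih =>
    rw [sum_range_succ, ih]
    push_cast
    ring

private lemma sumC2 (b : ℕ) : ∑ j ∈ range b, (j : ℂ) ^ 2 = b * (b - 1) * (2 * b - 1) / 6 := by
  induction b with
  | zero => simp
  | succ n ih =>
    rw [sum_range_succ, ih]
    push_cast
    ring

private lemma pow_comm_exp (b l j : ℕ) :
    (Complex.exp (2 * Real.pi * I * l / b)) ^ j = (Complex.exp (2 * Real.pi * I * j / b)) ^ l := by
  rw [← Complex.exp_nat_mul, ← Complex.exp_nat_mul]
  congr 1
  ring

private lemma main_c (b : ℕ) (hb : 2 ≤ b) :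
    ∑ l ∈ Finset.Icc 1 (b - 1), (1 : ℂ) / ((Real.sin ((l : ℝ) * Real.pi / b) : ℂ)) ^ 2
      = ((b : ℂ) ^ 2 - 1) / 3 := by
  have hb0 : b ≠ 0 := by omega
  have hbc : (b : ℂ) ≠ 0 := Nat.cast_ne_zero.mpr hb0
  have step1 : ∀ l ∈ Finset.Icc 1 (b - 1),
      (1 : ℂ) / ((Real.sin ((l : ℝ) * Real.pi / b) : ℂ)) ^ 2
        = 2 / (b : ℂ) * (∑ j ∈ range b, (j : ℂ) ^ 2 * (Complex.exp (2 * Real.pi * I * l / b)) ^ j)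
          - 2 * ∑ j ∈ range b, (j : ℂ) * (Complex.exp (2 * Real.pi * I * l / b)) ^ j := by
    intro l hl
    rw [Finset.mem_Icc] at hl
    have hzb := z_pow b l hb0
    have hzne := z_ne_one b l hl.1 (by omega)
    have hz0 : Complex.exp (2 * Real.pi * I * l / b) ≠ 0 := Complex.exp_ne_zero _
    have hz1 : Complex.exp (2 * Real.pi * I * l / b) - 1 ≠ 0 := sub_ne_zero.mpr hzne
    have hsin : ((Real.sin ((l : ℝ) * Real.pi / b) : ℂ)) ^ 2
        = -(Complex.exp (2 * Real.pi * I * l / b) - 1) ^ 2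
            / (4 * Complex.exp (2 * Real.pi * I * l / b)) := by
      rw [sin_sq_c]
      have : Complex.exp (2 * (((l : ℝ) * Real.pi / b : ℝ) : ℂ) * I)
          = Complex.exp (2 * Real.pi * I * l / b) := by
        congr 1
        push_cast
        ring
      rw [this]
    rw [hsin]
    have hrw : (1 : ℂ) / (-(Complex.exp (2 * Real.pi * I * l / b) - 1) ^ 2
        / (4 * Complex.exp (2 * Real.pi * I * l / b)))
        = -4 * Complex.exp (2 * Real.pi * I * l / b)
            / (Complex.exp (2 * Real.pi * I * l / b) - 1) ^ 2 := by
      field_simp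
    rw [hrw]
    exact key_point b hb0 _ hzb hzne
  rw [Finset.sum_congr rfl step1, Finset.sum_sub_distrib, ← Finset.mul_sum, ← Finset.mul_sum]
  have swap2 : ∑ l ∈ Finset.Icc 1 (b - 1), ∑ j ∈ range b,
      (j : ℂ) ^ 2 * (Complex.exp (2 * Real.pi * I * l / b)) ^ j
      = -(↑b * (↑b - 1) * (2 * ↑b - 1) / 6) := by
    rw [Finset.sum_congr rfl fun l _ => Finset.sum_congr rfl fun j _ => by
      rw [pow_comm_exp]]
    rw [Finset.sum_comm]
    have : ∀ j ∈ range b, ∑ l ∈ Finset.Icc 1 (b - 1),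
        (j : ℂ) ^ 2 * (Complex.exp (2 * Real.pi * I * j / b)) ^ l = -((j : ℂ) ^ 2) := by
      intro j hj
      rw [← Finset.mul_sum, innerSumRoots b j hb (Finset.mem_range.mp hj)]
      by_cases h : j = 0
      · subst h; simp
      · rw [if_neg h]; ring
    rw [Finset.sum_congr rfl this, Finset.sum_neg_distrib, sumC2]
  have swap1 : ∑ l ∈ Finset.Icc 1 (b - 1), ∑ j ∈ range b,
      (j : ℂ) * (Complex.exp (2 * Real.pi * I * l / b)) ^ j
      = -(↑b * (↑b - 1) / 2) := by
    rw [Finset.sum_congr rfl fun l _ => Finset.sum_congr rfl fun j _ => by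
      rw [pow_comm_exp]]
    rw [Finset.sum_comm]
    have : ∀ j ∈ range b, ∑ l ∈ Finset.Icc 1 (b - 1),
        (j : ℂ) * (Complex.exp (2 * Real.pi * I * j / b)) ^ l = -((j : ℂ)) := by
      intro j hj
      rw [← Finset.mul_sum, innerSumRoots b j hb (Finset.mem_range.mp hj)]
      by_cases h : j = 0
      · subst h; simp
      · rw [if_neg h]; ring
    rw [Finset.sum_congr rfl this, Finset.sum_neg_distrib, sumC1]
  rw [swap1, swap2]
  field_simp
  ring

theorem inv_sin_sq_sum (b : ℕ) (hb : 2 ≤ b) :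
    ∑ l ∈ Finset.Icc 1 (b - 1), 1 / (Real.sin ((l : ℝ) * Real.pi / b)) ^ 2
      = ((b : ℝ) ^ 2 - 1) / 3 := by
  have h := main_c b hb
  rw [← Complex.ofReal_inj]
  push_cast at h ⊢
  exact h
end

section
/- For any natural number b ≥ 2, the sum over l from 1 to b-1 of 1/|e^{2πil/b} - 1|² equals (b²-1)/12. -/
open Finset Complex

lemma lemB' (z : ℂ) (n : ℕ) :
    (z - 1) * ∑ k ∈ range n, (k : ℂ) * z ^ k
      = ((n : ℂ) - 1) * z ^ n - ∑ k ∈ range n, z ^ k + 1 := by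
  induction n with
  | zero => simp
  | succ n ih =>
    rw [Finset.sum_range_succ, Finset.sum_range_succ (fun k => z ^ k)]
    push_cast
    ring_nf
    ring_nf at ih
    linear_combination ih

lemma lemA (z : ℂ) (b : ℕ) (hzb : z ^ b = 1) (hz : z ≠ 1) :
    ∑ k ∈ range b, z ^ k = 0 := by
  rw [geom_sum_eq hz, hzb, sub_self, zero_div]

lemma lemB (z : ℂ) (b : ℕ) (hzb : z ^ b = 1) (hz : z ≠ 1) :
    ∑ k ∈ range b, (k : ℂ) * z ^ k = (b : ℂ) / (z - 1) := by
  have h1 : z - 1 ≠ 0 := sub_ne_zero.mpr hz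
  field_simp
  rw [mul_comm, lemB' z b, hzb, lemA z b hzb hz]
  ring

lemma lemD (b j k : ℕ) (hb : 2 ≤ b) (hj : j < b) (hk : k < b) :
    b ∣ j + (b - 1) * k ↔ j = k := by
  haveI : NeZero b := ⟨by omega⟩
  constructor
  · intro h
    have hz : ((j + (b - 1) * k : ℕ) : ZMod b) = 0 := by
      exact_mod_cast (ZMod.natCast_eq_zero_iff _ _).mpr h
    have hb1 : (1:ℕ) ≤ b := by omega
    push_cast [Nat.cast_sub hb1] at hz
    rw [ZMod.natCast_self] at hz
    have hjk : (j : ZMod b) = (k : ZMod b) := by linear_combination hz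
    have := congrArg ZMod.val hjk
    rwa [ZMod.val_cast_of_lt hj, ZMod.val_cast_of_lt hk] at this
  · rintro rfl
    have h1 : j + (b - 1) * j = b * j := by
      have hb1 : (1 + (b-1)) = b := by omega
      calc j + (b-1)*j = (1 + (b-1)) * j := by ring
        _ = b * j := by rw [hb1]
    exact h1 ▸ Dvd.intro j rfl

lemma sumP (n : ℕ) : ∑ k ∈ range n, (k:ℂ) = ((n:ℂ)^2 - n)/2 := by
  induction n with
  | zero => simp
  | succ n ih => rw [Finset.sum_range_succ, ih]; push_cast; ring

lemma sumQ (n : ℕ) : ∑ k ∈ range n, (k:ℂ)^2 = (2*(n:ℂ)^3 - 3*n^2 + n)/6 := by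
  induction n with
  | zero => simp
  | succ n ih => rw [Finset.sum_range_succ, ih]; push_cast; ring

theorem sum_inv_abs_exp_sub_one_sq (b : ℕ) (hb : 2 ≤ b) :
    ∑ l ∈ Finset.Icc 1 (b - 1),
        1 / ‖Complex.exp (2 * Real.pi * Complex.I * l / b) - 1‖ ^ 2
      = ((b : ℝ) ^ 2 - 1) / 12 := by
  have hbne : b ≠ 0 := by omega
  have hb0 : (b:ℂ) ≠ 0 := Nat.cast_ne_zero.mpr hbne
  set ζ : ℂ := Complex.exp (2 * Real.pi * Complex.I / b) with hζdef
  have hζ : IsPrimitiveRoot ζ b := Complex.isPrimitiveRoot_exp b hbne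
  have hζb : ζ ^ b = 1 := hζ.pow_eq_one
  have hconjζ : (starRingEnd ℂ) ζ = ζ ^ (b-1) := by
    have h1 : ζ * ζ ^ (b-1) = 1 := by
      rw [← pow_succ']
      rw [show b - 1 + 1 = b by omega]
      exact hζb
    have h2 : (starRingEnd ℂ) ζ = ζ⁻¹ := by
      rw [hζdef, ← Complex.exp_conj, ← Complex.exp_neg]
      congr 1
      rw [show ((2:ℂ) * (Real.pi:ℝ) * Complex.I / b) = ((2 * Real.pi / b : ℝ) : ℂ) * Complex.I by
        push_cast; ring]
      simp [Complex.conj_ofReal, map_ofNat]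
    rw [h2, inv_eq_of_mul_eq_one_right h1]
  -- orthogonality over Icc
  have hIcc : ∀ x : ℂ, x ^ b = 1 →
      ∑ l ∈ Finset.Icc 1 (b-1), x ^ l = (if x = 1 then (b:ℂ) else 0) - 1 := by
    intro x hx
    have hins : Finset.range b = insert 0 (Finset.Icc 1 (b-1)) := by
      ext n; simp [Finset.mem_range, Finset.mem_Icc]; omega
    split_ifs with h
    · subst h
      simp only [one_pow, Finset.sum_const, nsmul_eq_mul, mul_one]
      rw [Nat.card_Icc]
      push_cast [show b - 1 + 1 - 1 = b - 1 from rfl, Nat.cast_sub (show 1 ≤ b by omega)]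
      ring
    · have h0 : ∑ l ∈ Finset.range b, x ^ l = 0 := lemA x b hx h
      rw [hins, Finset.sum_insert (by simp)] at h0
      simp only [pow_zero] at h0
      linear_combination h0
  have hpow : ∀ m : ℕ, (ζ ^ m) ^ b = 1 := fun m => by
    rw [← pow_mul, mul_comm, pow_mul, hζb, one_pow]
  rw [← Complex.ofReal_inj]
  push_cast
  have step1 : ∀ l ∈ Finset.Icc 1 (b-1),
      (1:ℂ) / ((‖Complex.exp (2*(Real.pi:ℝ)*Complex.I*(l:ℕ)/b) - 1‖ : ℝ) : ℂ)^2
        = 1/(b:ℂ)^2 * ∑ j ∈ range b, ∑ k ∈ range b,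
            (j:ℂ) * k * (ζ ^ (j + (b-1)*k)) ^ l := by
    intro l hl
    rw [Finset.mem_Icc] at hl
    have hl1 : 0 < l := hl.1
    have hlb : l < b := by omega
    set z : ℂ := ζ ^ l with hzdef
    set zc : ℂ := (ζ ^ (b-1)) ^ l with hzcdef
    have hzc' : zc = ζ ^ ((b-1)*l) := by rw [hzcdef, ← pow_mul]
    have hexp : Complex.exp (2*(Real.pi:ℝ)*Complex.I*l/b) = z := by
      rw [hzdef, hζdef, ← Complex.exp_nat_mul]
      congr 1
      ring
    have hz1 : z ≠ 1 := hζ.pow_ne_one_of_pos_of_lt hl1.ne' hlb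
    have hzb : z ^ b = 1 := hpow l
    have hc : (starRingEnd ℂ) z = zc := by rw [hzdef, map_pow, hconjζ, hzcdef]
    have hzc1 : zc ≠ 1 := by
      intro h
      apply hz1
      have h2 := congrArg (starRingEnd ℂ) (hc.trans h)
      simpa using h2
    have hzcb : zc ^ b = 1 := by rw [hzc']; exact hpow _
    have habs : ((‖z - 1‖ : ℝ) : ℂ)^2 = (z - 1) * (zc - 1) := by
      rw [← Complex.ofReal_pow, Complex.sq_norm, ← Complex.mul_conj]
      rw [map_sub, map_one, hc]
    have hz0 : z - 1 ≠ 0 := sub_ne_zero.mpr hz1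
    have hzc0 : zc - 1 ≠ 0 := sub_ne_zero.mpr hzc1
    have hB1 : ∑ j ∈ range b, (j:ℂ) * z ^ j = b / (z - 1) := lemB z b hzb hz1
    have hB2 : ∑ k ∈ range b, (k:ℂ) * zc ^ k = b / (zc - 1) := lemB zc b hzcb hzc1
    have hprod : ∑ j ∈ range b, ∑ k ∈ range b, (j:ℂ) * k * (ζ ^ (j + (b-1)*k)) ^ l
        = (∑ j ∈ range b, (j:ℂ) * z ^ j) * (∑ k ∈ range b, (k:ℂ) * zc ^ k) := by
      rw [Finset.sum_mul_sum]
      apply Finset.sum_congr rfl; intro j _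
      apply Finset.sum_congr rfl; intro k _
      rw [hzdef, hzcdef, ← pow_mul, ← pow_mul, ← pow_mul, ← pow_mul,
        show (j + (b-1)*k)*l = l*j + (b-1)*l*k by ring, pow_add]
      ring
    rw [hexp, habs, hprod, hB1, hB2]
    field_simp
  rw [Finset.sum_congr rfl step1, ← Finset.mul_sum, Finset.sum_comm]
  have swap2 : ∀ j ∈ range b,
      ∑ l ∈ Finset.Icc 1 (b-1), ∑ k ∈ range b, (j:ℂ) * k * (ζ ^ (j + (b-1)*k)) ^ l
        = ∑ k ∈ range b, ∑ l ∈ Finset.Icc 1 (b-1), (j:ℂ) * k * (ζ ^ (j + (b-1)*k)) ^ l :=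
    fun j _ => Finset.sum_comm
  rw [Finset.sum_congr rfl swap2]
  have key : ∀ j ∈ range b, ∀ k ∈ range b,
      ∑ l ∈ Finset.Icc 1 (b-1), (j:ℂ) * k * (ζ ^ (j + (b-1)*k)) ^ l
        = (j:ℂ) * k * ((if j = k then (b:ℂ) else 0) - 1) := by
    intro j hj k hk
    rw [Finset.mem_range] at hj hk
    rw [← Finset.mul_sum, hIcc _ (hpow _)]
    congr 2
    exact if_congr (by rw [hζ.pow_eq_one_iff_dvd]; exact lemD b j k hb hj hk) rfl rfl
  have key2 : ∀ j ∈ range b,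
      ∑ k ∈ range b, ∑ l ∈ Finset.Icc 1 (b-1), (j:ℂ) * k * (ζ ^ (j + (b-1)*k)) ^ l
        = (j:ℂ)^2 * b - j * ∑ k ∈ range b, (k:ℂ) := by
    intro j hj
    rw [Finset.sum_congr rfl (key j hj)]
    simp only [mul_sub, mul_one, mul_ite, mul_zero]
    rw [Finset.sum_sub_distrib, Finset.sum_ite_eq (range b) j (fun k => (j:ℂ)*k*b),
      if_pos hj, ← Finset.mul_sum]
    ring
  rw [Finset.sum_congr rfl key2, Finset.sum_sub_distrib]
  simp only [← Finset.sum_mul, sumP, sumQ]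
  field_simp
  ring
end

section
/- Let b ≥ 2 and n ≥ 1 be integers. Then Σ over all tuples (t_1,...,t_n) ∈ {0,...,b-1}^n of Σ_{i,j=1}^n b^{i-j} t_i t_j equals (1/4)b^{2n+1} + (n/12)b^{n+2} - (1/2)b^{n+1} - (n/12)b^n + (1/4)b. -/
open Finset

private lemma sum_id_real (m : ℕ) :
    ∑ x ∈ Finset.range m, (x : ℝ) = m * ((m : ℝ) - 1) / 2 := by
  induction m with
  | zero => simp
  | succ k ih => rw [Finset.sum_range_succ, ih]; push_cast; ring

private lemma sum_sq_real (m : ℕ) :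
    ∑ x ∈ Finset.range m, (x : ℝ) ^ 2 = m * ((m : ℝ) - 1) * (2 * m - 1) / 6 := by
  induction m with
  | zero => simp
  | succ k ih => rw [Finset.sum_range_succ, ih]; push_cast; ring

theorem sum_digits_zeta (b n : ℕ) (hb : 2 ≤ b) (hn : 1 ≤ n) :
    ∑ t : Fin n → Fin b, ∑ i : Fin n, ∑ j : Fin n,
        (b : ℝ) ^ (((i : ℕ) : ℤ) - ((j : ℕ) : ℤ)) * ((t i : ℕ) : ℝ) * ((t j : ℕ) : ℝ)
      = (b : ℝ) ^ (2 * n + 1) / 4 + (n : ℝ) * (b : ℝ) ^ (n + 2) / 12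
        - (b : ℝ) ^ (n + 1) / 2 - (n : ℝ) * (b : ℝ) ^ n / 12 + (b : ℝ) / 4 := by
  have hb0 : (b : ℝ) ≠ 0 := by positivity
  have hb1 : (b : ℝ) ≠ 1 := by
    have : (2 : ℝ) ≤ b := by exact_mod_cast hb
    linarith
  have hbi1 : (b : ℝ)⁻¹ ≠ 1 := by
    intro h
    apply hb1
    have : ((b : ℝ)⁻¹)⁻¹ = (1 : ℝ)⁻¹ := by rw [h]
    simpa using this
  set S1 : ℝ := ∑ x : Fin b, ((x : ℕ) : ℝ) with hS1def
  set S2 : ℝ := ∑ x : Fin b, ((x : ℕ) : ℝ) ^ 2 with hS2def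
  have hS1 : S1 = b * ((b : ℝ) - 1) / 2 := by
    rw [hS1def, Fin.sum_univ_eq_sum_range (fun x => ((x : ℕ) : ℝ))]
    exact sum_id_real b
  have hS2 : S2 = b * ((b : ℝ) - 1) * (2 * b - 1) / 6 := by
    rw [hS2def, Fin.sum_univ_eq_sum_range (fun x => ((x : ℕ) : ℝ) ^ 2)]
    exact sum_sq_real b
  set A : ℝ := (b : ℝ) ^ n / (b : ℝ) ^ 2 * S1 ^ 2 with hAdef
  set B : ℝ := (b : ℝ) ^ n / (b : ℝ) * S2 with hBdef
  -- key inner sum computation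
  have key : ∀ i j : Fin n,
      (∑ t : Fin n → Fin b, ((t i : ℕ) : ℝ) * ((t j : ℕ) : ℝ))
        = if i = j then B else A := by
    intro i j
    have hprod : ∀ t : Fin n → Fin b,
        ((t i : ℕ) : ℝ) * ((t j : ℕ) : ℝ)
          = ∏ k : Fin n, ((if k = i then ((t k : ℕ) : ℝ) else 1)
              * (if k = j then ((t k : ℕ) : ℝ) else 1)) := by
      intro t
      rw [Finset.prod_mul_distrib]
      simp [Finset.prod_ite_eq']
    calc (∑ t : Fin n → Fin b, ((t i : ℕ) : ℝ) * ((t j : ℕ) : ℝ))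
        = ∑ t ∈ Fintype.piFinset (fun _ : Fin n => (Finset.univ : Finset (Fin b))),
            ∏ k : Fin n, ((if k = i then ((t k : ℕ) : ℝ) else 1)
              * (if k = j then ((t k : ℕ) : ℝ) else 1)) := by
          rw [Fintype.piFinset_univ]
          exact Finset.sum_congr rfl fun t _ => hprod t
      _ = ∏ k : Fin n, ∑ x : Fin b,
            ((if k = i then ((x : ℕ) : ℝ) else 1) * (if k = j then ((x : ℕ) : ℝ) else 1)) := by
          exact (Finset.prod_univ_sum (fun _ : Fin n => (Finset.univ : Finset (Fin b)))
            (fun k x => (if k = i then ((x : ℕ) : ℝ) else 1) * (if k = j then ((x : ℕ) : ℝ) else 1))).symm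
      _ = if i = j then B else A := by
          by_cases hij : i = j
          · subst hij
            rw [if_pos rfl]
            have hterm : ∀ k : Fin n, (∑ x : Fin b,
                ((if k = i then ((x : ℕ) : ℝ) else 1) * (if k = i then ((x : ℕ) : ℝ) else 1)))
                  = if k = i then S2 else (b : ℝ) := by
              intro k
              by_cases hk : k = i
              · simp [hk, hS2def, sq]
              · simp [hk]
            rw [Finset.prod_congr rfl fun k _ => hterm k]
            rw [← Finset.mul_prod_erase Finset.univ _ (Finset.mem_univ i), if_pos rfl]
            rw [Finset.prod_congr rfl (fun k hk => if_neg (Finset.ne_of_mem_erase hk))]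
            rw [Finset.prod_const, Finset.card_erase_of_mem (Finset.mem_univ i)]
            simp only [Finset.card_univ, Fintype.card_fin]
            rw [hBdef, pow_sub₀ (b : ℝ) hb0 hn, pow_one]
            ring
          · rw [if_neg hij]
            have hji : ¬ j = i := fun h => hij h.symm
            have hterm : ∀ k : Fin n, (∑ x : Fin b,
                ((if k = i then ((x : ℕ) : ℝ) else 1) * (if k = j then ((x : ℕ) : ℝ) else 1)))
                  = if k = i then S1 else if k = j then S1 else (b : ℝ) := by
              intro k
              by_cases hk : k = i
              · simp [hk, hij, hS1def]
              · by_cases hk' : k = j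
                · simp [hk, hk', hji, hS1def]
                · simp [hk, hk']
            rw [Finset.prod_congr rfl fun k _ => hterm k]
            have hn2 : 2 ≤ n := by
              have : 1 < Fintype.card (Fin n) := Fintype.one_lt_card_iff.mpr ⟨i, j, hij⟩
              simp only [Fintype.card_fin] at this; omega
            have hjmem : j ∈ Finset.univ.erase i := Finset.mem_erase.mpr ⟨Ne.symm hij, Finset.mem_univ j⟩
            rw [← Finset.mul_prod_erase Finset.univ _ (Finset.mem_univ i), if_pos rfl]
            rw [← Finset.mul_prod_erase _ _ hjmem]
            rw [if_neg (Ne.symm hij), if_pos rfl]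
            have hrest : ∏ k ∈ (Finset.univ.erase i).erase j,
                (if k = i then S1 else if k = j then S1 else (b : ℝ)) = (b : ℝ) ^ (n - 2) := by
              rw [Finset.prod_congr rfl (fun k hk => ?_)]
              · rw [Finset.prod_const, Finset.card_erase_of_mem hjmem,
                  Finset.card_erase_of_mem (Finset.mem_univ i)]
                simp only [Finset.card_univ, Fintype.card_fin]
                rw [Nat.sub_sub]
              · have hki : k ≠ i := Finset.ne_of_mem_erase (Finset.mem_of_mem_erase hk)
                have hkj : k ≠ j := Finset.ne_of_mem_erase hk
                rw [if_neg hki, if_neg hkj]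
            rw [hrest, hAdef, pow_sub₀ (b : ℝ) hb0 hn2]
            ring
  -- swap sums
  have swap : (∑ t : Fin n → Fin b, ∑ i : Fin n, ∑ j : Fin n,
        (b : ℝ) ^ (((i : ℕ) : ℤ) - ((j : ℕ) : ℤ)) * ((t i : ℕ) : ℝ) * ((t j : ℕ) : ℝ))
      = ∑ i : Fin n, ∑ j : Fin n,
          (b : ℝ) ^ (((i : ℕ) : ℤ) - ((j : ℕ) : ℤ)) * (if i = j then B else A) := by
    rw [Finset.sum_comm]
    refine Finset.sum_congr rfl fun i _ => ?_
    rw [Finset.sum_comm]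
    refine Finset.sum_congr rfl fun j _ => ?_
    rw [← key i j, Finset.mul_sum]
    exact Finset.sum_congr rfl fun t _ => by ring
  rw [swap]
  -- split into uniform part and diagonal correction
  have split : ∀ i j : Fin n,
      (b : ℝ) ^ (((i : ℕ) : ℤ) - ((j : ℕ) : ℤ)) * (if i = j then B else A)
        = (b : ℝ) ^ (i : ℕ) * ((b : ℝ)⁻¹) ^ (j : ℕ) * A + (if i = j then B - A else 0) := by
    intro i j
    have hpow : (b : ℝ) ^ (((i : ℕ) : ℤ) - ((j : ℕ) : ℤ))
        = (b : ℝ) ^ (i : ℕ) * ((b : ℝ)⁻¹) ^ (j : ℕ) := by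
      rw [zpow_sub₀ hb0, zpow_natCast, zpow_natCast, inv_pow]
      ring
    by_cases hij : i = j
    · subst hij
      rw [if_pos rfl, if_pos rfl, hpow]
      have : (b : ℝ) ^ (i : ℕ) * ((b : ℝ)⁻¹) ^ (i : ℕ) = 1 := by
        rw [inv_pow, mul_inv_cancel₀ (pow_ne_zero _ hb0)]
      rw [this]; ring
    · rw [if_neg hij, if_neg hij, hpow]; ring
  rw [Finset.sum_congr rfl fun i _ => Finset.sum_congr rfl fun j _ => split i j]
  simp only [Finset.sum_add_distrib, Finset.sum_ite_eq, Finset.mem_univ, if_pos]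
  have g1 : ∑ i : Fin n, (b : ℝ) ^ (i : ℕ) = ((b : ℝ) ^ n - 1) / ((b : ℝ) - 1) := by
    rw [Fin.sum_univ_eq_sum_range (fun i => (b : ℝ) ^ i)]
    exact geom_sum_eq hb1 n
  have g2 : ∑ j : Fin n, ((b : ℝ)⁻¹) ^ (j : ℕ)
      = (((b : ℝ) ^ n)⁻¹ - 1) / ((b : ℝ)⁻¹ - 1) := by
    rw [Fin.sum_univ_eq_sum_range (fun j => ((b : ℝ)⁻¹) ^ j)]
    rw [geom_sum_eq hbi1 n, inv_pow]
  have hbm1 : (b : ℝ) - 1 ≠ 0 := sub_ne_zero.mpr hb1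
  have hbim1 : (b : ℝ)⁻¹ - 1 ≠ 0 := sub_ne_zero.mpr hbi1
  have hbn : (b : ℝ) ^ n ≠ 0 := pow_ne_zero _ hb0
  have hgeom : (((b : ℝ) ^ n)⁻¹ - 1) / ((b : ℝ)⁻¹ - 1)
      = ((b : ℝ) ^ n - 1) * (b : ℝ) / (((b : ℝ) - 1) * (b : ℝ) ^ n) := by
    rw [div_eq_div_iff hbim1 (mul_ne_zero hbm1 hbn)]
    field_simp
    ring
  have h1 : ∑ i : Fin n, ∑ j : Fin n, (b : ℝ) ^ (i : ℕ) * ((b : ℝ)⁻¹) ^ (j : ℕ) * A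
      = ((b : ℝ) ^ n - 1) / ((b : ℝ) - 1)
          * (((b : ℝ) ^ n - 1) * (b : ℝ) / (((b : ℝ) - 1) * (b : ℝ) ^ n)) * A := by
    simp only [← Finset.sum_mul]
    rw [← Finset.sum_mul_sum, g1, g2, hgeom]
  rw [h1, Finset.sum_const, Finset.card_univ, Fintype.card_fin, nsmul_eq_mul]
  rw [hAdef, hBdef, hS1, hS2]
  field_simp
  ring
end

section
/- Let b ≥ 2 and n ≥ 1 be integers, let 0 ≤ a ≤ n, and define s_i = t_i for 1 ≤ i ≤ a and s_i = b - 1 - t_i for a < i ≤ n. Then Σ over all tuples (t_1,...,t_n) ∈ {0,...,b-1}^n of Σ_{i,j=1}^n b^{i-j} t_i s_j equals (1/4)b^{2n+1} - (1/2)b^{n+1} + (1/4)b + (2a - n)·((b²-1)/12)·b^n. -/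
lemma aux_key (b n : ℕ) (hb : (b:ℝ) ≠ 0) (i j : Fin n) (f g : Fin b → ℝ) :
    ∑ t : Fin n → Fin b, f (t i) * g (t j) =
      if i = j then (b:ℝ)^n / b * ∑ x : Fin b, f x * g x
      else (b:ℝ)^n / b^2 * ((∑ x : Fin b, f x) * (∑ x : Fin b, g x)) := by
  classical
  set h : Fin n → Fin b → ℝ := fun k x => (if k = i then f x else 1) * (if k = j then g x else 1)
    with hh
  have h1 : ∀ t : Fin n → Fin b, f (t i) * g (t j) = ∏ k, h k (t k) := by
    intro t
    by_cases hij : i = j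
    · subst hij
      rw [Finset.prod_eq_single i (fun k _ hk => by simp [h, hk]) (by simp)]
      simp [h]
    · rw [← Finset.mul_prod_erase Finset.univ _ (Finset.mem_univ i),
        ← Finset.mul_prod_erase _ _ (Finset.mem_erase.2 ⟨Ne.symm hij, Finset.mem_univ j⟩),
        Finset.prod_eq_one (fun k hk => ?_)]
      · simp [h, hij, Ne.symm hij]
      · simp only [Finset.mem_erase] at hk
        simp [h, hk.1, hk.2.1]
  have h2 : ∑ t : Fin n → Fin b, ∏ k, h k (t k) = ∏ k, ∑ x : Fin b, h k x :=
    (Fintype.prod_sum h).symm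
  simp only [h1, h2]
  have hconst : ∀ k : Fin n, k ≠ i → k ≠ j → ∑ x : Fin b, h k x = (b : ℝ) := by
    intro k hki hkj
    simp [h, hki, hkj]
  by_cases hij : i = j
  · subst hij
    rw [if_pos rfl, ← Finset.mul_prod_erase Finset.univ _ (Finset.mem_univ i),
      Finset.prod_congr rfl (fun k hk => hconst k (Finset.mem_erase.1 hk).1 (Finset.mem_erase.1 hk).1),
      Finset.prod_const, Finset.card_erase_of_mem (Finset.mem_univ i), Finset.card_univ,
      Fintype.card_fin, pow_sub₀ _ hb i.pos.nat_succ_le]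
    have : ∑ x : Fin b, h i x = ∑ x : Fin b, f x * g x := by simp [h]
    rw [this]; field_simp; ring
  · have h2n : 2 ≤ n := by
      have h1' := i.isLt; have h2' := j.isLt
      have h3' : (i:ℕ) ≠ (j:ℕ) := fun hv => hij (Fin.ext hv)
      omega
    rw [if_neg hij, ← Finset.mul_prod_erase Finset.univ _ (Finset.mem_univ i),
      ← Finset.mul_prod_erase _ _ (Finset.mem_erase.2 ⟨Ne.symm hij, Finset.mem_univ j⟩),
      Finset.prod_congr rfl (fun k hk => by
        simp only [Finset.mem_erase] at hk
        exact hconst k hk.2.1 hk.1),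
      Finset.prod_const, Finset.card_erase_of_mem
        (Finset.mem_erase.2 ⟨Ne.symm hij, Finset.mem_univ j⟩),
      Finset.card_erase_of_mem (Finset.mem_univ i), Finset.card_univ, Fintype.card_fin]
    have hcard : n - 1 - 1 = n - 2 := by omega
    rw [hcard, pow_sub₀ _ hb h2n]
    have hi : ∑ x : Fin b, h i x = ∑ x : Fin b, f x := by simp [h, hij]
    have hj : ∑ x : Fin b, h j x = ∑ x : Fin b, g x := by simp [h, Ne.symm hij]
    rw [hi, hj]; field_simp

lemma aux_S1 (b : ℕ) : ∑ x : Fin b, ((x:ℕ):ℝ) = ((b:ℝ)^2 - b)/2 := by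
  rw [Fin.sum_univ_eq_sum_range]
  induction b with
  | zero => simp
  | succ m ih => rw [Finset.sum_range_succ, ih]; push_cast; ring

lemma aux_S2 (b : ℕ) : ∑ x : Fin b, ((x:ℕ):ℝ)^2 = (2*(b:ℝ)^3 - 3*(b:ℝ)^2 + b)/6 := by
  rw [Fin.sum_univ_eq_sum_range (fun x => ((x:ℕ):ℝ)^2)]
  induction b with
  | zero => simp
  | succ m ih => rw [Finset.sum_range_succ, ih]; push_cast; ring

theorem sum_digits_hammersley (b n a : ℕ) (hb : 2 ≤ b) (hn : 1 ≤ n) (ha : a ≤ n) :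
    ∑ t : Fin n → Fin b, ∑ i : Fin n, ∑ j : Fin n,
        (b : ℝ) ^ (((i : ℕ) : ℤ) - ((j : ℕ) : ℤ)) * ((t i : ℕ) : ℝ) *
          (if (j : ℕ) + 1 ≤ a then ((t j : ℕ) : ℝ) else (b : ℝ) - 1 - ((t j : ℕ) : ℝ))
      = (b : ℝ) ^ (2 * n + 1) / 4 - (b : ℝ) ^ (n + 1) / 2 + (b : ℝ) / 4
        + (2 * (a : ℝ) - (n : ℝ)) * (((b : ℝ) ^ 2 - 1) / 12) * (b : ℝ) ^ n := by
  have hb0 : (b:ℝ) ≠ 0 := Nat.cast_ne_zero.2 (by omega)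
  have hb2 : (2:ℝ) ≤ (b:ℝ) := by exact_mod_cast hb
  have hb1 : (b:ℝ) ≠ 1 := by linarith
  have hbinv1 : (b:ℝ)⁻¹ ≠ 1 := by
    rw [ne_eq, inv_eq_one]; exact hb1
  set S1v : ℝ := ((b:ℝ)^2 - b)/2 with hS1v
  set S2v : ℝ := (2*(b:ℝ)^3 - 3*(b:ℝ)^2 + b)/6 with hS2v
  set Wv : ℝ := ((b:ℝ)^3 - 3*(b:ℝ)^2 + 2*b)/6 with hWv
  set cv : ℝ := (b:ℝ)^n / (b:ℝ)^2 * (S1v * S1v) with hcv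
  -- sum of the "g" function
  have hsg : ∀ j : Fin n,
      ∑ x : Fin b, (if (j:ℕ)+1 ≤ a then ((x:ℕ):ℝ) else (b:ℝ) - 1 - ((x:ℕ):ℝ)) = S1v := by
    intro j
    by_cases hj : (j:ℕ)+1 ≤ a
    · simp only [if_pos hj]; exact aux_S1 b
    · simp only [if_neg hj]
      rw [Finset.sum_sub_distrib, Finset.sum_sub_distrib, Finset.sum_const, aux_S1,
        Finset.card_univ, Fintype.card_fin, nsmul_eq_mul]
      simp only [Finset.sum_const, Finset.card_univ, Fintype.card_fin, nsmul_eq_mul]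
      rw [hS1v]; ring
  have hdiag : ∀ j : Fin n,
      ∑ x : Fin b, ((x:ℕ):ℝ) * (if (j:ℕ)+1 ≤ a then ((x:ℕ):ℝ) else (b:ℝ) - 1 - ((x:ℕ):ℝ))
        = if (j:ℕ)+1 ≤ a then S2v else Wv := by
    intro j
    by_cases hj : (j:ℕ)+1 ≤ a
    · simp only [if_pos hj]
      rw [hS2v]
      calc ∑ x : Fin b, ((x:ℕ):ℝ) * ((x:ℕ):ℝ)
          = ∑ x : Fin b, ((x:ℕ):ℝ)^2 := Finset.sum_congr rfl fun x _ => (pow_two _).symm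
        _ = _ := aux_S2 b
    · simp only [if_neg hj]
      have e : ∀ x : Fin b, ((x:ℕ):ℝ) * ((b:ℝ) - 1 - ((x:ℕ):ℝ))
          = ((b:ℝ) - 1) * ((x:ℕ):ℝ) - ((x:ℕ):ℝ)^2 := fun x => by ring
      rw [Finset.sum_congr rfl (fun x _ => e x), Finset.sum_sub_distrib, ← Finset.mul_sum,
        aux_S1, aux_S2, hWv]
      ring
  -- Step 1: swap sums
  have step1 : (∑ t : Fin n → Fin b, ∑ i : Fin n, ∑ j : Fin n,
        (b : ℝ) ^ (((i : ℕ) : ℤ) - ((j : ℕ) : ℤ)) * ((t i : ℕ) : ℝ) *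
          (if (j : ℕ) + 1 ≤ a then ((t j : ℕ) : ℝ) else (b : ℝ) - 1 - ((t j : ℕ) : ℝ)))
      = ∑ i : Fin n, ∑ j : Fin n, (b:ℝ) ^ (((i:ℕ):ℤ) - ((j:ℕ):ℤ)) *
          ∑ t : Fin n → Fin b, ((t i : ℕ) : ℝ) *
            (if (j : ℕ) + 1 ≤ a then ((t j : ℕ) : ℝ) else (b : ℝ) - 1 - ((t j : ℕ) : ℝ)) := by
    rw [Finset.sum_comm]
    refine Finset.sum_congr rfl fun i _ => ?_
    rw [Finset.sum_comm]
    refine Finset.sum_congr rfl fun j _ => ?_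
    rw [Finset.mul_sum]
    exact Finset.sum_congr rfl fun t _ => (mul_assoc _ _ _)
  rw [step1]
  -- Step 2: evaluate inner sums
  have step2 : ∀ i j : Fin n,
      ∑ t : Fin n → Fin b, ((t i : ℕ) : ℝ) *
          (if (j : ℕ) + 1 ≤ a then ((t j : ℕ) : ℝ) else (b : ℝ) - 1 - ((t j : ℕ) : ℝ))
        = if i = j then (b:ℝ)^n / b * (if (j:ℕ)+1 ≤ a then S2v else Wv)
          else cv := by
    intro i j
    rw [aux_key b n hb0 i j (fun x => ((x:ℕ):ℝ))
      (fun x => if (j:ℕ)+1 ≤ a then ((x:ℕ):ℝ) else (b:ℝ) - 1 - ((x:ℕ):ℝ))]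
    rw [hdiag j, hsg j, aux_S1, hcv]
  simp only [step2]
  -- Step 3: split diagonal
  have step3 : ∀ i j : Fin n,
      (b:ℝ) ^ (((i:ℕ):ℤ) - ((j:ℕ):ℤ)) *
        (if i = j then (b:ℝ)^n / b * (if (j:ℕ)+1 ≤ a then S2v else Wv) else cv)
      = (b:ℝ)^(i:ℕ) * ((b:ℝ)⁻¹)^(j:ℕ) * cv
        + (if i = j then (b:ℝ)^n / b * (if (j:ℕ)+1 ≤ a then S2v else Wv) - cv else 0) := by
    intro i j
    have hz : (b:ℝ) ^ (((i:ℕ):ℤ) - ((j:ℕ):ℤ)) = (b:ℝ)^(i:ℕ) * ((b:ℝ)⁻¹)^(j:ℕ) := by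
      rw [zpow_sub₀ hb0, zpow_natCast, zpow_natCast, div_eq_mul_inv, inv_pow]
    by_cases hij : i = j
    · subst hij
      simp only [if_pos rfl, sub_self, zpow_zero, one_mul, if_true]
      rw [inv_pow, mul_inv_cancel₀ (pow_ne_zero _ hb0)]
      ring
    · rw [if_neg hij, if_neg hij, hz]; ring
  simp only [step3, Finset.sum_add_distrib]
  -- the diagonal correction part
  have corr : ∑ i : Fin n, ∑ j : Fin n,
      (if i = j then (b:ℝ)^n / b * (if (j:ℕ)+1 ≤ a then S2v else Wv) - cv else 0)
      = (b:ℝ)^n / b * ((a:ℝ) * S2v + ((n:ℝ) - a) * Wv) - (n:ℝ) * cv := by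
    have e1 : ∀ i : Fin n, ∑ j : Fin n,
        (if i = j then (b:ℝ)^n / b * (if (j:ℕ)+1 ≤ a then S2v else Wv) - cv else 0)
        = (b:ℝ)^n / b * (if (i:ℕ)+1 ≤ a then S2v else Wv) - cv := by
      intro i
      rw [Finset.sum_ite_eq]
      simp
    rw [Finset.sum_congr rfl (fun i _ => e1 i), Finset.sum_sub_distrib, Finset.sum_const,
      Finset.card_univ, Fintype.card_fin, nsmul_eq_mul, ← Finset.mul_sum]
    congr 1
    congr 1
    rw [Fin.sum_univ_eq_sum_range (fun k => if k+1 ≤ a then S2v else Wv)]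
    rw [Finset.range_eq_Ico, ← Finset.sum_Ico_consecutive _ (Nat.zero_le a) ha]
    have e2 : ∑ x ∈ Finset.Ico 0 a, (if x+1 ≤ a then S2v else Wv) = (a:ℝ) * S2v := by
      rw [Finset.sum_congr rfl (fun x hx => if_pos (show x + 1 ≤ a from (Finset.mem_Ico.1 hx).2)),
        Finset.sum_const, Nat.card_Ico, nsmul_eq_mul]
      norm_num
    have e3' : ∑ x ∈ Finset.Ico a n, (if x+1 ≤ a then S2v else Wv) = ((n:ℝ) - a) * Wv := by
      rw [Finset.sum_congr rfl (fun x hx => if_neg (by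
        have := (Finset.mem_Ico.1 hx).1; omega)),
        Finset.sum_const, Nat.card_Ico, nsmul_eq_mul, Nat.cast_sub ha]
    rw [e2, e3']
  rw [corr]
  -- the main geometric part
  have geom : ∑ i : Fin n, ∑ j : Fin n, (b:ℝ)^(i:ℕ) * ((b:ℝ)⁻¹)^(j:ℕ) * cv
      = ((b:ℝ)^n - 1)/((b:ℝ) - 1) * ((((b:ℝ)⁻¹)^n - 1)/((b:ℝ)⁻¹ - 1)) * cv := by
    have hG1 : ∑ i : Fin n, (b:ℝ)^(i:ℕ) = ((b:ℝ)^n - 1)/((b:ℝ) - 1) := by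
      rw [Fin.sum_univ_eq_sum_range]; exact geom_sum_eq hb1 n
    have hG2 : ∑ j : Fin n, ((b:ℝ)⁻¹)^(j:ℕ) = (((b:ℝ)⁻¹)^n - 1)/((b:ℝ)⁻¹ - 1) := by
      rw [Fin.sum_univ_eq_sum_range]; exact geom_sum_eq hbinv1 n
    rw [← hG1, ← hG2, Finset.sum_mul_sum, Finset.sum_mul]
    exact Finset.sum_congr rfl fun i _ => by rw [Finset.sum_mul]
  rw [geom]
  -- final algebra
  have e1 : (b:ℝ)^(2*n+1) = ((b:ℝ)^n)^2 * b := by rw [pow_succ, mul_comm 2 n, pow_mul]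
  have e2 : (b:ℝ)^(n+1) = (b:ℝ)^n * b := pow_succ _ _
  have e3 : ((b:ℝ)⁻¹)^n = ((b:ℝ)^n)⁻¹ := inv_pow _ _
  have hPn0 : (b:ℝ)^n ≠ 0 := pow_ne_zero _ hb0
  have hb1' : (b:ℝ) - 1 ≠ 0 := sub_ne_zero.2 hb1
  have hbinv1' : (b:ℝ)⁻¹ - 1 ≠ 0 := sub_ne_zero.2 hbinv1
  have key2 : (((b:ℝ)⁻¹)^n - 1)/((b:ℝ)⁻¹ - 1) = (((b:ℝ)^n - 1) * b) / (((b:ℝ) - 1) * (b:ℝ)^n) := by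
    rw [inv_pow, div_eq_div_iff hbinv1' (mul_ne_zero hb1' hPn0)]
    field_simp
    ring
  rw [e1, e2, key2, hcv, hS1v, hS2v, hWv]
  field_simp
  ring
end

section
/- Let f(x) = x_1·...·x_d on [0,1)^d, let b ≥ 2, and let j ∈ ℕ_0^d, m ∈ D_j = ∏_i {0,...,b^{j_i}−1}, l ∈ B_j = ∏_i {1,...,b−1}. The b-adic Haar coefficient μ_{jml} = ∫_{[0,1)^d} f(x)·h_{jml}(x) dx equals b^{−2|j|−d} / ∏_{i=1}^d (e^{2πi·l_i/b} − 1), where |j| = j_1 + ... + j_d. -/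
open MeasureTheory Finset

/-- The `b`-adic Haar function on `[0,1)` of level `j`, position `m`, frequency `l`:
supported on `[m/b^j, (m+1)/b^j)`, with constant value `e^(2πi·l·k/b)` on the
`k`-th child interval. -/
noncomputable def badicHaar (b j m l : ℕ) (x : ℝ) : ℂ :=
  if x ∈ Set.Ico ((m : ℝ) / (b : ℝ) ^ j) (((m : ℝ) + 1) / (b : ℝ) ^ j) then
    Complex.exp (2 * Real.pi * Complex.I * (l : ℂ) *
      (((⌊(b : ℝ) ^ (j + 1) * x⌋ - (b : ℤ) * m : ℤ) : ℂ)) / (b : ℂ))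
  else 0

lemma sum_mul_geom_aux (ω : ℂ) (n : ℕ) :
    (ω - 1) * ∑ k ∈ range n, (k : ℂ) * ω ^ k
      = ((n : ℂ) - 1) * ω ^ n - ∑ k ∈ range n, ω ^ k + 1 := by
  induction n with
  | zero => simp
  | succ n ih =>
    rw [sum_range_succ, sum_range_succ, mul_add, ih]
    push_cast
    ring

lemma omega_ne_one (l b : ℕ) (h1 : 1 ≤ l) (h2 : l < b) :
    Complex.exp (2 * Real.pi * Complex.I * l / b) ≠ 1 := by
  intro h
  rw [Complex.exp_eq_one_iff] at h
  obtain ⟨n, hn⟩ := h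
  have hb : (b:ℂ) ≠ 0 := Nat.cast_ne_zero.mpr (by omega)
  have h2pi : (2 * (Real.pi:ℂ) * Complex.I) ≠ 0 := by
    simp [Real.pi_ne_zero, Complex.I_ne_zero]
  have hln : (l : ℂ) = n * b := by
    field_simp at hn
    linear_combination hn
  have hlz : (l : ℤ) = n * b := by exact_mod_cast hln
  have hn0 : 0 < n := by
    rcases le_or_gt n 0 with h | h
    · exfalso
      nlinarith [hlz, (by exact_mod_cast h1 : (1:ℤ) ≤ (l:ℤ)),
        (by exact_mod_cast Nat.pos_of_ne_zero (by omega) : (0:ℤ) < (b:ℤ))]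
    · exact h
  nlinarith [hlz, (by exact_mod_cast h2 : (l:ℤ) < (b:ℤ)), hn0]

lemma omega_pow_b (b l : ℕ) (hb : 2 ≤ b) :
    Complex.exp (2 * Real.pi * Complex.I * l / b) ^ b = 1 := by
  rw [← Complex.exp_nat_mul]
  have hbne : (b:ℂ) ≠ 0 := Nat.cast_ne_zero.mpr (by omega)
  have : (b:ℂ) * (2 * Real.pi * Complex.I * l / b) = (l : ℤ) * (2 * Real.pi * Complex.I) := by
    field_simp
    simp
  rw [this, Complex.exp_int_mul_two_pi_mul_I]

lemma integral_coe_Ico (a c : ℝ) (h : a ≤ c) :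
    ∫ x in Set.Ico a c, (x : ℂ) = (((c^2 - a^2)/2 : ℝ) : ℂ) := by
  have hr : ∫ x in Set.Ico a c, (x:ℝ) = (c^2 - a^2)/2 := by
    rw [integral_Ico_eq_integral_Ioo, ← integral_Ioc_eq_integral_Ioo,
      ← intervalIntegral.integral_of_le h, integral_id]
  rw [← hr]
  exact integral_ofReal (f := fun x : ℝ => x)

lemma badicHaar_integral (b j m l : ℕ) (hb : 2 ≤ b) (hm : m < b ^ j)
    (hl1 : 1 ≤ l) (hl2 : l < b) :
    ∫ x : ℝ, (x : ℂ) * badicHaar b j m l x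
      = (b : ℂ) ^ (-(2 * (j:ℤ)) - 1) / (Complex.exp (2 * Real.pi * Complex.I * l / b) - 1) := by
  set ω : ℂ := Complex.exp (2 * Real.pi * Complex.I * l / b) with hω
  have hω1 : ω ≠ 1 := omega_ne_one l b hl1 hl2
  have hωs : ω - 1 ≠ 0 := sub_ne_zero_of_ne hω1
  have hωb : ω ^ b = 1 := omega_pow_b b l hb
  have hb0 : (0:ℝ) < b := by positivity
  have hbc : (b:ℂ) ≠ 0 := Nat.cast_ne_zero.mpr (by omega)
  set B : ℝ := (b:ℝ) ^ (j+1) with hBdef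
  have hB : (0:ℝ) < B := by positivity
  set q : ℕ := b * m with hq
  set I : Set ℝ := Set.Ico ((m : ℝ) / (b : ℝ) ^ j) (((m : ℝ) + 1) / (b : ℝ) ^ j) with hI
  set child : ℕ → Set ℝ := fun k => Set.Ico (((q+k : ℕ):ℝ) / B) (((q+k+1 : ℕ):ℝ) / B) with hchild
  have hbj : (0:ℝ) < (b:ℝ)^j := by positivity
  -- endpoints of I in terms of B
  have hIeq : I = Set.Ico (((q:ℕ):ℝ)/B) (((q+b:ℕ):ℝ)/B) := by
    have e1 : ((m : ℝ)) / (b:ℝ)^j = ((q:ℕ):ℝ)/B := by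
      rw [hq, hBdef, pow_succ]; push_cast; rw [div_eq_div_iff hbj.ne' (by positivity)]; ring
    have e2 : ((m : ℝ) + 1) / (b:ℝ)^j = ((q+b:ℕ):ℝ)/B := by
      rw [hq, hBdef, pow_succ]; push_cast; rw [div_eq_div_iff hbj.ne' (by positivity)]; ring
    rw [hI, e1, e2]
  -- the decomposition of I into children
  have hIunion : I = ⋃ k ∈ range b, child k := by
    rw [hIeq]
    ext x
    simp only [Set.mem_iUnion, Set.mem_Ico, mem_range, hchild]
    constructor
    · rintro ⟨h1, h2⟩
      have hx1 : ((q:ℕ):ℝ) ≤ B * x := by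
        rw [div_le_iff₀ hB] at h1; linarith
      have hx2 : B * x < ((q+b:ℕ):ℝ) := by
        rw [lt_div_iff₀ hB] at h2; linarith
      set n : ℤ := ⌊B * x⌋ with hn
      have hn1 : (q:ℤ) ≤ n := Int.le_floor.mpr (by exact_mod_cast hx1)
      have hn2 : n < (q:ℤ) + b := Int.floor_lt.mpr (by push_cast; exact_mod_cast hx2)
      refine ⟨(n - q).toNat, by omega, ?_, ?_⟩
      · rw [div_le_iff₀ hB]
        have key : ((q + (n - (q:ℤ)).toNat : ℕ) : ℤ) = n := by push_cast; omega
        have keyR : ((q + (n - (q:ℤ)).toNat : ℕ) : ℝ) = (n : ℝ) := by exact_mod_cast key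
        rw [keyR, mul_comm]
        exact Int.floor_le _
      · rw [lt_div_iff₀ hB]
        have key : ((q + (n - (q:ℤ)).toNat + 1 : ℕ) : ℤ) = n + 1 := by push_cast; omega
        have keyR : ((q + (n - (q:ℤ)).toNat + 1 : ℕ) : ℝ) = (n : ℝ) + 1 := by
          exact_mod_cast key
        rw [keyR, mul_comm]
        exact Int.lt_floor_add_one _
    · rintro ⟨k, hk, h1, h2⟩
      constructor
      · exact le_trans (div_le_div_of_nonneg_right (by exact_mod_cast Nat.le_add_right q k) hB.le) h1
      · exact lt_of_lt_of_le h2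
          (div_le_div_of_nonneg_right (by exact_mod_cast (by omega : q + k + 1 ≤ q + b)) hB.le)
  -- children are contained in I
  have hchildI : ∀ k, k < b → child k ⊆ I := by
    intro k hk
    rw [hIunion]
    intro x hx
    exact Set.mem_biUnion (mem_range.mpr hk) hx
  -- floor value on each child
  have hfloor : ∀ k, ∀ x ∈ child k, ⌊B * x⌋ = (q : ℤ) + k := by
    intro k x hx
    simp only [hchild, Set.mem_Ico] at hx
    obtain ⟨h1, h2⟩ := hx
    rw [Int.floor_eq_iff]
    constructor
    · rw [div_le_iff₀ hB, mul_comm] at h1; push_cast; push_cast at h1; linarith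
    · rw [lt_div_iff₀ hB, mul_comm] at h2; push_cast; push_cast at h2; linarith
  -- value of the integrand on each child
  have hfval : ∀ k, k < b → ∀ x ∈ child k, (x:ℂ) * badicHaar b j m l x = (x:ℂ) * ω ^ k := by
    intro k hk x hx
    have hxI : x ∈ I := hchildI k hk hx
    rw [hI] at hxI
    have hfl : ⌊(b:ℝ) ^ (j+1) * x⌋ = (q : ℤ) + k := by rw [← hBdef]; exact hfloor k x hx
    rw [badicHaar, if_pos hxI, hfl]
    congr 1
    rw [hω, ← Complex.exp_nat_mul]
    congr 1
    rw [hq]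
    push_cast
    ring
  -- integrability on each child
  have hint : ∀ k, k < b → IntegrableOn (fun x : ℝ => (x:ℂ) * badicHaar b j m l x) (child k) := by
    intro k hk
    have hg : IntegrableOn (fun x : ℝ => (x:ℂ) * ω ^ k) (child k) :=
      ((Complex.continuous_ofReal.mul continuous_const).integrableOn_Icc).mono_set
        Set.Ico_subset_Icc_self
    exact hg.congr_fun (fun x hx => (hfval k hk x hx).symm) measurableSet_Ico
  -- disjointness of children
  have hdisj : (↑(range b) : Set ℕ).Pairwise (Function.onFun Disjoint child) := by
    intro k _ k' _ hne
    have cmono : ∀ {a c : ℕ}, a ≤ c → ((a:ℕ):ℝ)/B ≤ ((c:ℕ):ℝ)/B := fun h =>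
      div_le_div_of_nonneg_right (by exact_mod_cast h) hB.le
    rcases lt_or_gt_of_ne hne with h | h
    · exact Set.Ico_disjoint_Ico.mpr
        (le_trans (min_le_left _ _) (le_trans (cmono (by omega)) (le_max_right _ _)))
    · exact Set.Ico_disjoint_Ico.mpr
        (le_trans (min_le_right _ _) (le_trans (cmono (by omega)) (le_max_left _ _)))
  -- geometric sums
  have hS0 : ∑ k ∈ range b, ω ^ k = 0 := by
    rw [geom_sum_eq hω1, hωb]; simp
  have hS1 : ∑ k ∈ range b, (k:ℂ) * ω ^ k = b / (ω - 1) := by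
    have h := sum_mul_geom_aux ω b
    rw [hωb, hS0] at h
    rw [eq_div_iff hωs]
    linear_combination h
  have hsum : ∑ k ∈ range b, (2*(q:ℂ) + 2*k + 1) * ω ^ k = 2 * b / (ω - 1) := by
    have e : ∀ k : ℕ, (2*(q:ℂ) + 2*k + 1) * ω ^ k
        = (2*(q:ℂ)+1) * ω ^ k + 2 * ((k:ℂ) * ω ^ k) := fun k => by ring
    simp_rw [e]
    rw [sum_add_distrib, ← mul_sum, ← mul_sum, hS0, hS1]
    field_simp
    ring
  -- main computation
  have step1 : ∫ x : ℝ, (x:ℂ) * badicHaar b j m l x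
      = ∫ x in I, (x:ℂ) * badicHaar b j m l x := by
    rw [← integral_indicator measurableSet_Ico]
    congr 1
    funext x
    by_cases hx : x ∈ I
    · rw [Set.indicator_of_mem (hI ▸ hx)]
    · rw [Set.indicator_of_notMem (hI ▸ hx)]
      have : badicHaar b j m l x = 0 := by
        rw [badicHaar, if_neg (hI ▸ hx)]
      rw [this, mul_zero]
  have step2 : ∫ x in I, (x:ℂ) * badicHaar b j m l x
      = ∑ k ∈ range b, ∫ x in child k, (x:ℂ) * badicHaar b j m l x := by
    rw [hIunion]
    exact integral_biUnion_finset (range b) (fun k _ => measurableSet_Ico) hdisj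
      (fun k hk => hint k (mem_range.mp hk))
  have step3 : ∀ k, k < b → ∫ x in child k, (x:ℂ) * badicHaar b j m l x
      = ((2*(q:ℂ) + 2*k + 1) / (2 * ((b:ℂ)^(j+1))^2)) * ω ^ k := by
    intro k hk
    have e1 : ∫ x in child k, (x:ℂ) * badicHaar b j m l x
        = ∫ x in child k, (x:ℂ) * ω ^ k :=
      setIntegral_congr_fun measurableSet_Ico (fun x hx => hfval k hk x hx)
    have hle : ((q+k : ℕ):ℝ)/B ≤ ((q+k+1 : ℕ):ℝ)/B :=
      div_le_div_of_nonneg_right (by exact_mod_cast Nat.le_succ _) hB.le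
    rw [e1, MeasureTheory.integral_mul_const, integral_coe_Ico _ _ hle]
    congr 1
    rw [hBdef]
    push_cast
    field_simp
    ring
  rw [step1, step2]
  rw [sum_congr rfl (fun k hk => step3 k (mem_range.mp hk))]
  have e2 : ∀ k : ℕ, ((2*(q:ℂ) + 2*k + 1) / (2 * ((b:ℂ)^(j+1))^2)) * ω ^ k
      = ((2*(q:ℂ) + 2*k + 1) * ω ^ k) / (2 * ((b:ℂ)^(j+1))^2) := fun k => by ring
  simp_rw [e2]
  rw [← sum_div, hsum]
  have hzp : (b:ℂ) ^ (-(2*(j:ℤ)) - 1) = ((b:ℂ) ^ (2*j+1))⁻¹ := by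
    rw [show -(2*(j:ℤ)) - 1 = -((2*j+1 : ℕ) : ℤ) by push_cast; ring, zpow_neg, zpow_natCast]
  rw [hzp]
  field_simp
  ring

lemma badicHaar_zero_outside (b j m l : ℕ) (hm : m < b ^ j) (x : ℝ)
    (hx : x ∉ Set.Ico (0:ℝ) 1) : badicHaar b j m l x = 0 := by
  rw [badicHaar, if_neg]
  intro hmem
  apply hx
  obtain ⟨h1, h2⟩ := hmem
  have hbj : (0:ℝ) < (b:ℝ)^j := by
    have : 0 < b ^ j := by omega
    exact_mod_cast this
  constructor
  · exact le_trans (by positivity) h1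
  · refine lt_of_lt_of_le h2 ?_
    rw [div_le_one hbj]
    have := Nat.succ_le_of_lt hm
    exact_mod_cast this

lemma prod_zpow_eq {ι : Type*} (s : Finset ι) (c : ℂ) (hc : c ≠ 0) (e : ι → ℤ) :
    ∏ i ∈ s, c ^ e i = c ^ (∑ i ∈ s, e i) := by
  induction s using Finset.cons_induction with
  | empty => simp
  | cons a s ha ih => rw [prod_cons, sum_cons, ih, zpow_add₀ hc]

theorem haar_coeff_of_product (d b : ℕ) (hd : 0 < d) (hb : 2 ≤ b)
    (j m l : Fin d → ℕ) (hm : ∀ i, m i < b ^ j i) (hl : ∀ i, 1 ≤ l i ∧ l i < b) :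
    ∫ x in Set.univ.pi (fun _ : Fin d => Set.Ico (0 : ℝ) 1),
        ((∏ i, x i : ℝ) : ℂ) * ∏ i, badicHaar b (j i) (m i) (l i) (x i)
      = (b : ℂ) ^ (-(2 * ∑ i, (j i : ℤ)) - (d : ℤ)) /
          ∏ i, (Complex.exp (2 * Real.pi * Complex.I * (l i) / b) - 1) := by
  have hS : MeasurableSet (Set.univ.pi fun _ : Fin d => Set.Ico (0:ℝ) 1) :=
    MeasurableSet.univ_pi (fun _ => measurableSet_Ico)
  have key : (Set.univ.pi fun _ : Fin d => Set.Ico (0:ℝ) 1).indicator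
      (fun x : Fin d → ℝ =>
        ((∏ i, x i : ℝ) : ℂ) * ∏ i, badicHaar b (j i) (m i) (l i) (x i))
      = fun x => ∏ i, ((x i : ℂ) * badicHaar b (j i) (m i) (l i) (x i)) := by
    funext x
    by_cases hx : x ∈ Set.univ.pi fun _ : Fin d => Set.Ico (0:ℝ) 1
    · rw [Set.indicator_of_mem hx, Complex.ofReal_prod, ← Finset.prod_mul_distrib]
    · rw [Set.indicator_of_notMem hx]
      symm
      rw [Set.mem_univ_pi] at hx
      push_neg at hx
      obtain ⟨i, hxi⟩ := hx
      exact Finset.prod_eq_zero (Finset.mem_univ i)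
        (by rw [badicHaar_zero_outside b (j i) (m i) (l i) (hm i) (x i) hxi, mul_zero])
  rw [← integral_indicator hS, key,
    MeasureTheory.integral_fintype_prod_volume_eq_prod (ι := Fin d)
      (f := fun i (y:ℝ) => (y:ℂ) * badicHaar b (j i) (m i) (l i) y)]
  have hval : ∀ i, ∫ y : ℝ, (y:ℂ) * badicHaar b (j i) (m i) (l i) y
      = (b:ℂ)^(-(2*((j i):ℤ))-1) / (Complex.exp (2*Real.pi*Complex.I*(l i)/b) - 1) :=
    fun i => badicHaar_integral b (j i) (m i) (l i) hb (hm i) (hl i).1 (hl i).2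
  rw [Finset.prod_congr rfl (fun i _ => hval i), Finset.prod_div_distrib]
  congr 1
  rw [prod_zpow_eq _ _ (Nat.cast_ne_zero.mpr (by omega)) _]
  congr 1
  rw [Finset.sum_sub_distrib, Finset.sum_const, Finset.card_univ, Fintype.card_fin]
  simp [Finset.sum_neg_distrib, Finset.mul_sum]
end
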